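/- arXiv:2502.13085 — 2 statements merged into one kernel-verified Lean document; each statement's English description precedes it below -/
import Mathlib

section
/- Let f: ℝⁿ → ℝⁿ be a continuously differentiable map whose Jacobian matrix df(x) is, at every point x, lower triangular with strictly positive diagonal entries (that is, ∂f_i/∂x_j(x) = 0 for all j > i and ∂f_i/∂x_i(x) > 0 for all i and all x). Then f is injective. -/
/-- A continuously differentiable map `f : ℝⁿ → ℝⁿ` whose Jacobian is everywhere lower
triangular (`∂f_i/∂x_j = 0` for `j > i`) with strictly positive diagonal entries
(`∂f_i/∂x_i > 0`) is injective. -/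
theorem lowerTriangular_jacobian_injective
    (n : ℕ) (f : (Fin n → ℝ) → (Fin n → ℝ))
    (hf : ContDiff ℝ 1 f)
    (h_upper : ∀ (x : Fin n → ℝ) (i j : Fin n), i < j →
      fderiv ℝ f x (Pi.single j 1) i = 0)
    (h_diag : ∀ (x : Fin n → ℝ) (i : Fin n), 0 < fderiv ℝ f x (Pi.single i 1) i) :
    Function.Injective f := by
  have hdiff : Differentiable ℝ f := hf.differentiable one_ne_zero
  have hsum : ∀ (z v : Fin n → ℝ) (i : Fin n),
      fderiv ℝ f z v i = ∑ j, v j * fderiv ℝ f z (Pi.single j 1) i := by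
    intro z v i
    have hv : v = ∑ j, v j • (Pi.single j 1 : Fin n → ℝ) := by
      ext k
      simp [Pi.single_apply, Finset.sum_ite_eq' (Finset.univ : Finset (Fin n)) k]
    conv_lhs => rw [hv]
    rw [map_sum]
    simp [Finset.sum_apply]
  intro a b hfab
  have key : ∀ i : Fin n, (∀ j, j < i → a j = b j) → a i = b i := by
    intro i hlt
    set v : Fin n → ℝ := b - a with hvdef
    have hv0 : ∀ j, j < i → v j = 0 := by
      intro j hj
      simp [hvdef, hlt j hj]
    set g : ℝ → ℝ := fun t => f (a + t • v) i with hgdef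
    have hg : ∀ t : ℝ, HasDerivAt g (fderiv ℝ f (a + t • v) v i) t := by
      intro t
      have hline : HasDerivAt (fun t : ℝ => a + t • v) v t := by
        simpa using ((hasDerivAt_id t).smul_const v).const_add a
      have h1 : HasDerivAt (fun t : ℝ => f (a + t • v)) (fderiv ℝ f (a + t • v) v) t :=
        (hdiff (a + t • v)).hasFDerivAt.comp_hasDerivAt t hline
      exact (hasDerivAt_pi.1 h1) i
    have hg01 : g 1 = g 0 := by
      have h1 : a + (1:ℝ) • v = b := by ext k; simp [hvdef]
      have h0 : a + (0:ℝ) • v = a := by ext k; simp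
      simp only [hgdef, h1, h0, hfab]
    obtain ⟨c, hc, hc'⟩ := exists_hasDerivAt_eq_slope g
      (fun t => fderiv ℝ f (a + t • v) v i) one_pos
      (fun t _ => (hg t).continuousAt.continuousWithinAt)
      (fun t _ => hg t)
    have hslope : fderiv ℝ f (a + c • v) v i = 0 := by
      rw [hc']
      simp [slope, hg01]
    rw [hsum] at hslope
    rw [Finset.sum_eq_single i] at hslope
    · have hdpos := h_diag (a + c • v) i
      have : v i = 0 := by
        by_contra h
        exact h (by
          have := mul_eq_zero.1 hslope
          rcases this with h' | h'
          · exact h'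
          · exact absurd h' hdpos.ne')
      have : b i - a i = 0 := by simpa [hvdef] using this
      linarith
    · intro j _ hji
      rcases lt_or_gt_of_ne hji with h | h
      · rw [hv0 j h, zero_mul]
      · rw [h_upper _ i j h, mul_zero]
    · intro h; exact absurd (Finset.mem_univ i) h
  have all : ∀ m : ℕ, ∀ i : Fin n, (i : ℕ) ≤ m → a i = b i := by
    intro m
    induction m with
    | zero => exact fun i hi => key i fun j hj => absurd (Fin.lt_def.1 hj) (by omega)
    | succ m ih =>
        exact fun i hi => key i fun j hj => ih j (by have := Fin.lt_def.1 hj; omega)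
  funext i
  exact all i i le_rfl
end

section
/- Let μ and ν be absolutely continuous probability measures on ℝ^{2n} = ℝⁿ × ℝⁿ, and let μ₁, ν₁ denote their marginal distributions on the first n coordinates and μ₂, ν₂ their marginal distributions on the last n coordinates. Let T₁: ℝⁿ → ℝⁿ and T₂: ℝⁿ → ℝⁿ be measurable maps such that (T₁)_*μ₁ = ν₁ and (T₂)_*μ₂ = ν₂. Then there exists a measurable map T: ℝ^{2n} → ℝ^{2n} with T_*μ = ν of the form T(y,x) = (T₁(y), T̄(y, T₂(x))) for a suitable measurable map T̄: ℝ^{2n} → ℝⁿ. -/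
open MeasureTheory Set

namespace BTAux

noncomputable def cdfR (P : Measure ℝ) (t : ℝ) : ℝ := (P (Iic t)).toReal

noncomputable def quantile (P : Measure ℝ) (u : ℝ) : ℝ := sInf {x | u ≤ cdfR P x}

variable {P : Measure ℝ} [IsProbabilityMeasure P]

lemma cdfR_nonneg (t : ℝ) : 0 ≤ cdfR P t := ENNReal.toReal_nonneg

lemma cdfR_le_one (t : ℝ) : cdfR P t ≤ 1 := by
  rw [cdfR, ← ENNReal.toReal_one]
  exact ENNReal.toReal_mono ENNReal.one_ne_top prob_le_one

lemma ofReal_cdfR (t : ℝ) : ENNReal.ofReal (cdfR P t) = P (Iic t) :=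
  ENNReal.ofReal_toReal (measure_ne_top _ _)

lemma cdfR_mono : Monotone (cdfR P) := fun a b hab =>
  ENNReal.toReal_mono (measure_ne_top _ _) (measure_mono (Iic_subset_Iic.2 hab))

lemma le_cdfR_iff {t u : ℝ} (hu : 0 ≤ u) :
    u ≤ cdfR P t ↔ ENNReal.ofReal u ≤ P (Iic t) := by
  rw [← ofReal_cdfR, ENNReal.ofReal_le_ofReal_iff (cdfR_nonneg t)]

lemma le_cdfR_of_forall_lt {a u : ℝ} (h : ∀ x, a < x → u ≤ cdfR P x) : u ≤ cdfR P a := by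
  rcases le_or_gt u 0 with hu | hu
  · exact hu.trans (cdfR_nonneg a)
  have hset : ⋂ n : ℕ, Iic (a + ((n : ℝ) + 1)⁻¹) = Iic a := by
    ext x
    simp only [mem_iInter, mem_Iic]
    constructor
    · intro hx
      by_contra hxa
      push_neg at hxa
      obtain ⟨n, hn⟩ := exists_nat_one_div_lt (sub_pos.mpr hxa)
      have := hx n
      rw [one_div] at hn
      linarith
    · intro hx n
      have : (0:ℝ) < ((n : ℝ) + 1)⁻¹ := by positivity
      linarith
  have hkey : P (Iic a) = ⨅ n : ℕ, P (Iic (a + ((n : ℝ) + 1)⁻¹)) := by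
    rw [← hset]
    refine Antitone.measure_iInter (fun m n hmn => Iic_subset_Iic.2 ?_)
      (fun n => nullMeasurableSet_Iic) ⟨0, measure_ne_top _ _⟩
    have hc : (m : ℝ) ≤ (n : ℝ) := Nat.cast_le.2 hmn
    have : ((n : ℝ) + 1)⁻¹ ≤ ((m : ℝ) + 1)⁻¹ := by
      apply inv_anti₀ (by positivity)
      linarith
    linarith
  rw [le_cdfR_iff hu.le, hkey]
  refine le_iInf fun n => ?_
  rw [← ofReal_cdfR]
  refine ENNReal.ofReal_le_ofReal (h _ ?_)
  have : (0:ℝ) < ((n : ℝ) + 1)⁻¹ := by positivity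
  linarith


lemma cdfR_le_of_forall_lt {a t : ℝ} (hP : ∀ c : ℝ, P {c} = 0) (ht : 0 ≤ t)
    (ha : ∀ x, x < a → cdfR P x ≤ t) : cdfR P a ≤ t := by
  have hIic : P (Iic a) = P (Iio a) := by
    refine le_antisymm ?_ (measure_mono Iio_subset_Iic_self)
    rw [← Iio_union_right]
    exact le_trans (measure_union_le _ _) (by rw [hP a]; simp)
  have hset : ⋃ n : ℕ, Iic (a - ((n : ℝ) + 1)⁻¹) = Iio a := by
    ext x
    simp only [mem_iUnion, mem_Iic, mem_Iio]
    constructor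
    · rintro ⟨n, hn⟩
      have : (0:ℝ) < ((n : ℝ) + 1)⁻¹ := by positivity
      linarith
    · intro hx
      obtain ⟨n, hn⟩ := exists_nat_one_div_lt (sub_pos.mpr hx)
      rw [one_div] at hn
      exact ⟨n, by linarith⟩
  have hIio : P (Iio a) = ⨆ n : ℕ, P (Iic (a - ((n : ℝ) + 1)⁻¹)) := by
    rw [← hset]
    refine Monotone.measure_iUnion (fun m n hmn => Iic_subset_Iic.2 ?_)
    have hc : (m : ℝ) ≤ (n : ℝ) := Nat.cast_le.2 hmn
    have : ((n : ℝ) + 1)⁻¹ ≤ ((m : ℝ) + 1)⁻¹ := by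
      apply inv_anti₀ (by positivity)
      linarith
    linarith
  have hle : P (Iic a) ≤ ENNReal.ofReal t := by
    rw [hIic, hIio]
    refine iSup_le fun n => ?_
    rw [← ofReal_cdfR]
    refine ENNReal.ofReal_le_ofReal (ha _ ?_)
    have : (0:ℝ) < ((n : ℝ) + 1)⁻¹ := by positivity
    linarith
  calc cdfR P a ≤ (ENNReal.ofReal t).toReal :=
        ENNReal.toReal_mono ENNReal.ofReal_ne_top hle
    _ = t := ENNReal.toReal_ofReal ht

lemma bddBelow_quantile_set {u : ℝ} (hbd : ∃ x, cdfR P x < u) :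
    BddBelow {x | u ≤ cdfR P x} := by
  obtain ⟨x, hx⟩ := hbd
  refine ⟨x, fun z hz => ?_⟩
  by_contra hzx
  push_neg at hzx
  exact absurd (le_trans hz (cdfR_mono hzx.le)) (not_le.2 hx)

lemma le_cdfR_quantile {u : ℝ} (hne : ∃ x, u ≤ cdfR P x) (hbd : ∃ x, cdfR P x < u) :
    u ≤ cdfR P (quantile P u) := by
  refine le_cdfR_of_forall_lt fun x hx => ?_
  obtain ⟨z, hzE, hzx⟩ := exists_lt_of_csInf_lt hne hx
  exact le_trans hzE (cdfR_mono hzx.le)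

lemma quantile_le_iff {u t : ℝ} (hne : ∃ x, u ≤ cdfR P x) (hbd : ∃ x, cdfR P x < u) :
    quantile P u ≤ t ↔ u ≤ cdfR P t := by
  constructor
  · intro h
    exact (le_cdfR_quantile hne hbd).trans (cdfR_mono h)
  · intro h
    exact csInf_le (bddBelow_quantile_set hbd) h


section Joint

variable {ι : Type*} [MeasurableSpace ι]

lemma measurable_cdfR_uncurry (P : ι → Measure ℝ) [∀ b, IsProbabilityMeasure (P b)]
    (hP : ∀ t : ℝ, Measurable fun b => P b (Iic t)) :
    Measurable fun p : ι × ℝ => cdfR (P p.1) p.2 := by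
  have key : ∀ p : ι × ℝ,
      P p.1 (Iic p.2) = ⨅ q : ℚ, (if p.2 < (q : ℝ) then P p.1 (Iic (q : ℝ)) else 1) := by
    intro p
    refine le_antisymm (le_iInf fun q => ?_) ?_
    · split_ifs with h
      · exact measure_mono (Iic_subset_Iic.2 h.le)
      · exact prob_le_one
    · obtain ⟨q0, hq0⟩ := exists_rat_gt p.2
      have hS : Nonempty {q : ℚ // p.2 < (q : ℝ)} := ⟨⟨q0, hq0⟩⟩
      have hiInter : ⋂ q : {q : ℚ // p.2 < (q : ℝ)}, Iic ((q : ℚ) : ℝ) = Iic p.2 := by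
        ext x
        simp only [mem_iInter, mem_Iic]
        constructor
        · intro hx
          by_contra hxp
          push_neg at hxp
          obtain ⟨q, hq1, hq2⟩ := exists_rat_btwn hxp
          exact absurd (hx ⟨q, hq1⟩) (not_le.2 hq2)
        · intro hx q
          exact hx.trans q.2.le
      have hmeas := Directed.measure_iInter (μ := P p.1)
        (s := fun q : {q : ℚ // p.2 < (q : ℝ)} => Iic ((q : ℚ) : ℝ))
        (fun q => nullMeasurableSet_Iic) ?_ ⟨hS.some, measure_ne_top _ _⟩
      · calc (⨅ q : ℚ, if p.2 < (q : ℝ) then P p.1 (Iic (q : ℝ)) else 1)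
            ≤ ⨅ q : {q : ℚ // p.2 < (q : ℝ)},
                (if p.2 < ((q : ℚ) : ℝ) then P p.1 (Iic ((q : ℚ) : ℝ)) else 1) :=
              le_iInf fun q => iInf_le _ (q : ℚ)
          _ = ⨅ q : {q : ℚ // p.2 < (q : ℝ)}, P p.1 (Iic ((q : ℚ) : ℝ)) := by
              refine iInf_congr fun q => if_pos q.2
          _ = P p.1 (Iic p.2) := by rw [← hmeas, hiInter]
      · intro q r
        rcases le_total (q : ℚ) (r : ℚ) with h | h
        · exact ⟨⟨q, q.2⟩, subset_rfl, Iic_subset_Iic.2 (by exact_mod_cast h)⟩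
        · exact ⟨⟨r, r.2⟩, Iic_subset_Iic.2 (by exact_mod_cast h), subset_rfl⟩
  have hmeas : Measurable fun p : ι × ℝ => P p.1 (Iic p.2) := by
    simp only [key]
    refine Measurable.iInf fun q => Measurable.ite ?_ ((hP _).comp measurable_fst)
      measurable_const
    exact measurableSet_lt measurable_snd measurable_const
  exact hmeas.ennreal_toReal

lemma measurable_quantile_uncurry (P : ι → Measure ℝ) [∀ b, IsProbabilityMeasure (P b)]
    (hP : ∀ t : ℝ, Measurable fun b => P b (Iic t)) :
    Measurable fun p : ι × ℝ => quantile (P p.1) p.2 := by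
  have hc : ∀ t : ℝ, Measurable fun b => cdfR (P b) t := fun t => (hP t).ennreal_toReal
  refine measurable_of_Iic fun t => ?_
  have hset : (fun p : ι × ℝ => quantile (P p.1) p.2) ⁻¹' Iic t
      = ({p : ι × ℝ | (∃ q : ℚ, p.2 ≤ cdfR (P p.1) (q : ℝ)) ∧
            (∃ q : ℚ, cdfR (P p.1) (q : ℝ) < p.2)} ∩ {p : ι × ℝ | p.2 ≤ cdfR (P p.1) t})
        ∪ ({p : ι × ℝ | (∃ q : ℚ, p.2 ≤ cdfR (P p.1) (q : ℝ)) ∧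
            (∃ q : ℚ, cdfR (P p.1) (q : ℝ) < p.2)}ᶜ ∩ {p : ι × ℝ | (0:ℝ) ≤ t}) := by
    ext p
    simp only [mem_preimage, mem_Iic, mem_union, mem_inter_iff, mem_setOf_eq, mem_compl_iff]
    by_cases hA : (∃ q : ℚ, p.2 ≤ cdfR (P p.1) (q : ℝ)) ∧
        (∃ q : ℚ, cdfR (P p.1) (q : ℝ) < p.2)
    · have hA' := hA
      obtain ⟨⟨q1, hq1⟩, ⟨q2, hq2⟩⟩ := hA'
      rw [quantile_le_iff ⟨(q1 : ℝ), hq1⟩ ⟨(q2 : ℝ), hq2⟩]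
      tauto
    · have hq0 : quantile (P p.1) p.2 = 0 := by
        rcases not_and_or.mp hA with h1 | h2
        · push_neg at h1
          have hE : {x | p.2 ≤ cdfR (P p.1) x} = ∅ := by
            refine eq_empty_iff_forall_notMem.2 fun x hx => ?_
            obtain ⟨q, hq⟩ := exists_rat_gt x
            exact absurd (le_trans hx (cdfR_mono hq.le)) (not_le.2 (h1 q))
          rw [quantile, hE, Real.sInf_empty]
        · push_neg at h2
          have hnb : ¬ BddBelow {x | p.2 ≤ cdfR (P p.1) x} := by
            rintro ⟨b, hb⟩
            obtain ⟨q, hq⟩ := exists_rat_lt b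
            exact absurd (hb (h2 q)) (not_le.2 hq)
          rw [quantile, csInf_of_not_bddBelow hnb, Real.sInf_empty]
      rw [hq0]
      tauto
  rw [hset]
  have hle : ∀ q : ℚ, MeasurableSet {p : ι × ℝ | p.2 ≤ cdfR (P p.1) (q : ℝ)} :=
    fun q => measurableSet_le measurable_snd ((hc _).comp measurable_fst)
  have hltm : ∀ q : ℚ, MeasurableSet {p : ι × ℝ | cdfR (P p.1) (q : ℝ) < p.2} :=
    fun q => measurableSet_lt ((hc _).comp measurable_fst) measurable_snd
  have hAmeas : MeasurableSet {p : ι × ℝ | (∃ q : ℚ, p.2 ≤ cdfR (P p.1) (q : ℝ)) ∧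
      (∃ q : ℚ, cdfR (P p.1) (q : ℝ) < p.2)} := by
    have h1 : {p : ι × ℝ | (∃ q : ℚ, p.2 ≤ cdfR (P p.1) (q : ℝ)) ∧
        (∃ q : ℚ, cdfR (P p.1) (q : ℝ) < p.2)}
        = (⋃ q : ℚ, {p : ι × ℝ | p.2 ≤ cdfR (P p.1) (q : ℝ)})
          ∩ (⋃ q : ℚ, {p : ι × ℝ | cdfR (P p.1) (q : ℝ) < p.2}) := by
      ext p; simp [mem_iUnion]
    rw [h1]
    exact (MeasurableSet.iUnion hle).inter (MeasurableSet.iUnion hltm)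
  have hFt : MeasurableSet {p : ι × ℝ | p.2 ≤ cdfR (P p.1) t} :=
    measurableSet_le measurable_snd ((hc t).comp measurable_fst)
  exact (hAmeas.inter hFt).union (hAmeas.compl.inter (MeasurableSet.const _))

end Joint

lemma exists_cdfR_lt (u : ℝ) (hu : 0 < u) : ∃ x, cdfR P x < u := by
  have hset : ⋂ n : ℕ, Iic (-(n : ℝ)) = ∅ := by
    refine eq_empty_iff_forall_notMem.2 fun x hx => ?_
    simp only [mem_iInter, mem_Iic] at hx
    obtain ⟨n, hn⟩ := exists_nat_gt (-x)
    linarith [hx n]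
  have hinf : ⨅ n : ℕ, P (Iic (-(n : ℝ))) = 0 := by
    rw [← Directed.measure_iInter (fun n => nullMeasurableSet_Iic) ?_
      ⟨0, measure_ne_top _ _⟩, hset, measure_empty]
    intro m n
    rcases le_total m n with h | h
    · exact ⟨n, Iic_subset_Iic.2 (by exact_mod_cast neg_le_neg (Nat.cast_le.2 h)), subset_rfl⟩
    · exact ⟨m, subset_rfl, Iic_subset_Iic.2 (by exact_mod_cast neg_le_neg (Nat.cast_le.2 h))⟩
  have : (⨅ n : ℕ, P (Iic (-(n : ℝ)))) < ENNReal.ofReal u := by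
    rw [hinf]; exact ENNReal.ofReal_pos.2 hu
  obtain ⟨n, hn⟩ := iInf_lt_iff.1 this
  refine ⟨-(n : ℝ), ?_⟩
  have := ENNReal.toReal_lt_toReal (measure_ne_top _ _) ENNReal.ofReal_ne_top |>.2 hn
  rwa [ENNReal.toReal_ofReal hu.le] at this

lemma exists_le_cdfR (u : ℝ) (hu : u < 1) : ∃ x, u ≤ cdfR P x := by
  rcases le_or_gt u 0 with h | h
  · exact ⟨0, h.trans (cdfR_nonneg 0)⟩
  have hset : ⋃ n : ℕ, Iic ((n : ℝ)) = univ := by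
    refine eq_univ_iff_forall.2 fun x => ?_
    obtain ⟨n, hn⟩ := exists_nat_gt x
    exact mem_iUnion.2 ⟨n, hn.le⟩
  have hsup : ⨆ n : ℕ, P (Iic ((n : ℝ))) = 1 := by
    rw [← Monotone.measure_iUnion (fun m n hmn => Iic_subset_Iic.2 (Nat.cast_le.2 hmn)), hset,
      measure_univ]
  have : ENNReal.ofReal u < ⨆ n : ℕ, P (Iic ((n : ℝ))) := by
    rw [hsup]; exact ENNReal.ofReal_lt_one.2 hu
  obtain ⟨n, hn⟩ := lt_iSup_iff.1 this
  exact ⟨(n : ℝ), (le_cdfR_iff h.le).2 hn.le⟩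

lemma volume_Ioo_inter_Iic {a : ℝ} (ha : a ≤ 1) :
    volume (Ioo (0:ℝ) 1 ∩ Iic a) = ENNReal.ofReal a := by
  rcases le_or_gt a 0 with h | h
  · have he : Ioo (0:ℝ) 1 ∩ Iic a = ∅ := by
      refine eq_empty_iff_forall_notMem.2 fun x hx => ?_
      obtain ⟨⟨h1, _⟩, h2⟩ := hx
      simp only [mem_Iic] at h2
      linarith
    rw [he, measure_empty, Eq.comm, ENNReal.ofReal_eq_zero]
    exact h
  rcases eq_or_lt_of_le ha with rfl | h1
  · have he : Ioo (0:ℝ) 1 ∩ Iic 1 = Ioo 0 1 :=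
      inter_eq_left.2 fun x hx => hx.2.le
    rw [he, Real.volume_Ioo]
    norm_num
  · have he : Ioo (0:ℝ) 1 ∩ Iic a = Ioc 0 a := by
      ext x
      simp only [mem_inter_iff, mem_Ioo, mem_Iic, mem_Ioc]
      constructor
      · rintro ⟨⟨hx1, _⟩, hx2⟩; exact ⟨hx1, hx2⟩
      · rintro ⟨hx1, hx2⟩; exact ⟨⟨hx1, lt_of_le_of_lt hx2 h1⟩, hx2⟩
    rw [he, Real.volume_Ioc, sub_zero]

instance : IsProbabilityMeasure (volume.restrict (Ioo (0:ℝ) 1)) := by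
  constructor
  rw [Measure.restrict_apply_univ, Real.volume_Ioo]
  norm_num

lemma map_quantile (P : Measure ℝ) [IsProbabilityMeasure P] (hm : Measurable (quantile P)) :
    (volume.restrict (Ioo (0:ℝ) 1)).map (quantile P) = P := by
  refine Measure.ext_of_Iic _ P fun t => ?_
  rw [Measure.map_apply hm measurableSet_Iic,
    Measure.restrict_apply (hm measurableSet_Iic)]
  have hset : quantile P ⁻¹' Iic t ∩ Ioo 0 1 = Iic (cdfR P t) ∩ Ioo 0 1 := by
    ext u
    simp only [mem_inter_iff, mem_preimage, mem_Iic, mem_Ioo]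
    refine and_congr_left fun hu => ?_
    exact quantile_le_iff (exists_le_cdfR u hu.2) (exists_cdfR_lt u hu.1)
  rw [hset, inter_comm, volume_Ioo_inter_Iic (cdfR_le_one t), ofReal_cdfR]

lemma map_cdfR (P : Measure ℝ) [IsProbabilityMeasure P] (hP : ∀ c : ℝ, P {c} = 0) :
    P.map (cdfR P) = volume.restrict (Ioo (0:ℝ) 1) := by
  have hcm : Measurable (cdfR P) := cdfR_mono.measurable
  refine Measure.ext_of_Iic _ _ fun t => ?_
  rw [Measure.map_apply hcm measurableSet_Iic,
    Measure.restrict_apply measurableSet_Iic, inter_comm]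
  rcases lt_or_ge t 0 with ht | ht
  · have h1 : cdfR P ⁻¹' Iic t = ∅ :=
      eq_empty_iff_forall_notMem.2 fun x hx =>
        absurd (le_trans (cdfR_nonneg x) hx) (not_le.2 ht)
    have h2 : Ioo (0:ℝ) 1 ∩ Iic t = ∅ := by
      refine eq_empty_iff_forall_notMem.2 fun x hx => ?_
      obtain ⟨⟨h3, _⟩, h4⟩ := hx
      simp only [mem_Iic] at h4
      linarith
    rw [h1, h2]
    simp
  rcases le_or_gt 1 t with ht1 | ht1
  · have h1 : cdfR P ⁻¹' Iic t = univ :=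
      eq_univ_iff_forall.2 fun x => le_trans (cdfR_le_one x) ht1
    have h2 : Ioo (0:ℝ) 1 ∩ Iic t = Ioo 0 1 :=
      inter_eq_left.2 fun x hx => hx.2.le.trans ht1
    rw [h1, h2, measure_univ, Real.volume_Ioo]
    norm_num
  · rw [volume_Ioo_inter_Iic ht1.le]
    set A := cdfR P ⁻¹' Iic t with hA
    rcases A.eq_empty_or_nonempty with hAe | hAne
    · have ht0 : t ≤ 0 := by
        by_contra h
        push_neg at h
        obtain ⟨x, hx⟩ := exists_cdfR_lt (P := P) t h
        exact absurd (mem_preimage.2 (mem_Iic.2 hx.le) : x ∈ A)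
          (eq_empty_iff_forall_notMem.1 hAe x)
      have ht0' : t = 0 := le_antisymm ht0 ht
      rw [hAe, measure_empty, ht0', ENNReal.ofReal_zero]
    · have hbdd : BddAbove A := by
        obtain ⟨z, hz⟩ := exists_le_cdfR (P := P) ((t+1)/2) (by linarith)
        have hz' : t < cdfR P z := lt_of_lt_of_le (by linarith) hz
        refine ⟨z, fun w hw => ?_⟩
        by_contra hwz
        push_neg at hwz
        exact absurd (le_trans (cdfR_mono hwz.le) hw) (not_le.2 hz')
      set a := sSup A with ha
      have haA : cdfR P a ≤ t := by
        refine cdfR_le_of_forall_lt hP ht fun x hx => ?_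
        obtain ⟨z, hzA, hxz⟩ := exists_lt_of_lt_csSup hAne hx
        exact le_trans (cdfR_mono hxz.le) hzA
      have hAIic : A = Iic a := by
        ext w
        simp only [hA, mem_preimage, mem_Iic]
        constructor
        · intro hw; exact le_csSup hbdd hw
        · intro hw; exact le_trans (cdfR_mono hw) haA
      have hta : t ≤ cdfR P a := by
        refine le_cdfR_of_forall_lt fun x hx => ?_
        by_contra hc
        push_neg at hc
        have : x ∈ A := mem_preimage.2 (mem_Iic.2 hc.le)
        exact absurd (le_csSup hbdd this) (not_le.2 hx)
      have : cdfR P a = t := le_antisymm haA hta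
      rw [hAIic, ← ofReal_cdfR, this]

lemma map_quantile_cdfR (P Q : Measure ℝ) [IsProbabilityMeasure P] [IsProbabilityMeasure Q]
    (hP : ∀ c : ℝ, P {c} = 0) (hq : Measurable (quantile Q)) :
    P.map (fun w => quantile Q (cdfR P w)) = Q := by
  have hcm : Measurable (cdfR P) := cdfR_mono.measurable
  have : (fun w => quantile Q (cdfR P w)) = quantile Q ∘ cdfR P := rfl
  rw [this, ← Measure.map_map hq hcm, map_cdfR P hP, map_quantile Q hq]


open ProbabilityTheory
open scoped ENNReal


lemma condKernel_ac {α : Type*} [MeasureSpace α] [SigmaFinite (volume : Measure α)]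
    [StandardBorelSpace α] [Nonempty α]
    (μ : Measure (α × α)) [IsFiniteMeasure μ] (hac : μ ≪ (volume : Measure (α × α))) :
    ∀ᵐ y ∂μ.fst, μ.condKernel y ≪ (volume : Measure α) := by
  set m : Measure α := volume with hm
  have hac' : μ ≪ m.prod m := by rwa [← Measure.volume_eq_prod]
  set f := μ.rnDeriv (m.prod m) with hf
  have hfm : Measurable f := Measure.measurable_rnDeriv μ _
  have hμeq : (m.prod m).withDensity f = μ :=
    Measure.withDensity_rnDeriv_eq μ _ hac'
  set f1 : α → ℝ≥0∞ := fun y => ∫⁻ x, f (y, x) ∂m with hf1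
  have hfm' : Measurable (Function.uncurry fun y x => f (y, x)) := by
    exact hfm
  have hf1m : Measurable f1 := hfm'.lintegral_prod_right
  have hμapp : ∀ {s : Set (α × α)}, MeasurableSet s →
      μ s = ∫⁻ y, ∫⁻ x, s.indicator f (y, x) ∂m ∂m := by
    intro s hs
    rw [← hμeq, withDensity_apply _ hs, ← lintegral_indicator hs,
      lintegral_prod _ ((hfm.indicator hs).aemeasurable)]
  have hfst : μ.fst = m.withDensity f1 := by
    ext s hs
    rw [Measure.fst_apply hs, hμapp (measurable_fst hs), withDensity_apply _ hs,
      ← lintegral_indicator hs]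
    refine lintegral_congr fun y => ?_
    by_cases hy : y ∈ s
    · have h1 : ∀ x : α, (Prod.fst ⁻¹' s).indicator f (y, x) = f (y, x) := fun x =>
        indicator_of_mem (by simpa using hy) f
      simp only [h1, indicator_of_mem hy]
      rfl
    · have h1 : ∀ x : α, (Prod.fst ⁻¹' s).indicator f (y, x) = 0 := fun x =>
        indicator_of_notMem (by simpa using hy) f
      simp only [h1, indicator_of_notMem hy, lintegral_zero]
  set g : α → α → ℝ≥0∞ := fun y x => if f1 y = 0 ∨ f1 y = ⊤ then 0 else f (y, x) * (f1 y)⁻¹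
    with hg
  have hgm : Measurable (Function.uncurry g) := by
    have hcond : MeasurableSet {p : α × α | f1 p.1 = 0 ∨ f1 p.1 = ⊤} := by
      have h0 : MeasurableSet {p : α × α | f1 p.1 = 0} :=
        (hf1m.comp measurable_fst) (measurableSet_singleton 0)
      have ht : MeasurableSet {p : α × α | f1 p.1 = ⊤} :=
        (hf1m.comp measurable_fst) (measurableSet_singleton ⊤)
      exact h0.union ht
    have hfm2 : Measurable fun p : α × α => f (p.1, p.2) * (f1 p.1)⁻¹ := by
      exact (by simpa using hfm : Measurable fun p : α × α => f (p.1, p.2)).mul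
        ((hf1m.comp measurable_fst).inv)
    exact Measurable.ite hcond measurable_const hfm2
  set κ' : Kernel α α := Kernel.withDensity (Kernel.const α m) g with hκ'
  have hκ'app : ∀ y, κ' y = m.withDensity (g y) := fun y => by
    rw [hκ', Kernel.withDensity_apply _ hgm, Kernel.const_apply]
  haveI : IsFiniteKernel κ' := by
    refine ⟨⟨1, ENNReal.one_lt_top, fun y => ?_⟩⟩
    rw [hκ'app y, withDensity_apply _ MeasurableSet.univ, Measure.restrict_univ]
    by_cases hy : f1 y = 0 ∨ f1 y = ⊤
    · simp only [hg, if_pos hy, lintegral_zero]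
      exact zero_le_one
    · push_neg at hy
      simp only [hg, if_neg (not_or.2 ⟨hy.1, hy.2⟩)]
      rw [lintegral_mul_const' _ _ (by simp [hy.1]), ENNReal.mul_inv_cancel hy.1 hy.2]
  have hf1ae : ∀ᵐ y ∂m, f1 y ≠ ⊤ := by
    have hint : ∫⁻ y, f1 y ∂m ≠ ⊤ := by
      have h1 : ∫⁻ y, f1 y ∂m = μ univ := by
        rw [hμapp MeasurableSet.univ]
        simp [indicator_univ]
        rfl
      rw [h1]
      exact measure_ne_top _ _
    exact (ae_lt_top hf1m hint).mono fun y hy => hy.ne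
  have hcomp : μ = μ.fst ⊗ₘ κ' := by
    ext s hs
    rw [Measure.compProd_apply hs, hfst,
      lintegral_withDensity_eq_lintegral_mul _ hf1m
        (Kernel.measurable_kernel_prodMk_left hs),
      hμapp hs]
    refine lintegral_congr_ae (hf1ae.mono fun y hyt => ?_)
    have hsec : MeasurableSet (Prod.mk y ⁻¹' s) := measurable_prodMk_left hs
    have hind : ∫⁻ x, s.indicator f (y, x) ∂m = ∫⁻ x in Prod.mk y ⁻¹' s, f (y, x) ∂m := by
      rw [← lintegral_indicator hsec]
      refine lintegral_congr fun x => ?_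
      by_cases hx : (y, x) ∈ s
      · rw [indicator_of_mem hx, indicator_of_mem (by simpa using hx)]
      · rw [indicator_of_notMem hx, indicator_of_notMem (by simpa using hx)]
    have hκs : κ' y (Prod.mk y ⁻¹' s) = ∫⁻ x in Prod.mk y ⁻¹' s, g y x ∂m := by
      rw [hκ'app y, withDensity_apply _ hsec]
    simp only [Pi.mul_apply]
    by_cases hy0 : f1 y = 0
    · have hz : ∫⁻ x in Prod.mk y ⁻¹' s, f (y, x) ∂m = 0 :=
        le_antisymm (le_trans (setLIntegral_le_lintegral _ _) hy0.le) zero_le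
      rw [hind, hz, hy0, zero_mul]
    · have hgy : ∀ x, g y x = f (y, x) * (f1 y)⁻¹ := fun x =>
        if_neg (not_or.2 ⟨hy0, hyt⟩)
      rw [hind, hκs]
      simp only [hgy]
      rw [lintegral_mul_const' _ _ (by simp [hy0]), mul_comm (∫⁻ x in _, f (y, x) ∂m) _,
        ← mul_assoc, ENNReal.mul_inv_cancel hy0 hyt, one_mul]
  have huniq := eq_condKernel_of_measure_eq_compProd κ' hcomp
  filter_upwards [huniq] with y hy
  rw [← hy, hκ'app y]
  exact withDensity_absolutelyContinuous _ _


lemma prob_eq_of_subsingleton {β : Type*} [MeasurableSpace β] [Subsingleton β]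
    (p q : Measure β) [IsProbabilityMeasure p] [IsProbabilityMeasure q] : p = q := by
  ext s hs
  rcases s.eq_empty_or_nonempty with rfl | ⟨x, hx⟩
  · simp
  · have hsu : s = univ := eq_univ_iff_forall.2 fun y => Subsingleton.elim x y ▸ hx
    rw [hsu]
    simp

end BTAux

open BTAux ProbabilityTheory

/-- Given absolutely continuous probability measures `μ, ν` on `ℝⁿ × ℝⁿ` and measurable maps
`T₁, T₂` transporting the respective marginals, there is a transport map `T` of `μ` to `ν`
of the form `T(y,x) = (T₁(y), T̄(y, T₂(x)))`. -/
theorem exists_blockTriangular_transport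
    (n : ℕ) (μ ν : Measure ((Fin n → ℝ) × (Fin n → ℝ)))
    [IsProbabilityMeasure μ] [IsProbabilityMeasure ν]
    (hμ_ac : μ ≪ volume) (hν_ac : ν ≪ volume)
    (T₁ T₂ : (Fin n → ℝ) → (Fin n → ℝ))
    (hT₁_meas : Measurable T₁) (hT₂_meas : Measurable T₂)
    (hT₁ : (μ.map Prod.fst).map T₁ = ν.map Prod.fst)
    (hT₂ : (μ.map Prod.snd).map T₂ = ν.map Prod.snd) :
    ∃ Tbar : (Fin n → ℝ) × (Fin n → ℝ) → (Fin n → ℝ), Measurable Tbar ∧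
      μ.map (fun z : (Fin n → ℝ) × (Fin n → ℝ) => (T₁ z.1, Tbar (z.1, T₂ z.2))) = ν := by
  classical
  rcases Nat.eq_zero_or_pos n with rfl | hn
  · haveI : Subsingleton (Fin 0 → ℝ) := ⟨fun a b => funext fun i => i.elim0⟩
    refine ⟨fun p => p.2, measurable_snd, ?_⟩
    have hmeas : Measurable fun z : (Fin 0 → ℝ) × (Fin 0 → ℝ) => (T₁ z.1, T₂ z.2) :=
      Subsingleton.measurable
    haveI := Measure.isProbabilityMeasure_map (μ := μ) hmeas.aemeasurable
    exact prob_eq_of_subsingleton _ _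
  -- Main case `n ≥ 1`
  haveI : Nonempty (Fin n) := ⟨⟨0, hn⟩⟩
  have hunc : ¬ Countable (Fin n → ℝ) := by
    intro h
    have hinj : Function.Injective (fun r : ℝ => (fun _ : Fin n => r)) := fun a b hab =>
      congrFun hab (Classical.arbitrary _)
    haveI : Countable ℝ := hinj.countable
    exact not_countable (α := ℝ) inferInstance
  have huncR : ¬ Countable ℝ := fun h => not_countable (α := ℝ) h
  let e : (Fin n → ℝ) ≃ᵐ ℝ := PolishSpace.measurableEquivOfNotCountable hunc huncR
  set κ := μ.condKernel with hκdef
  set ρ := ν.condKernel with hρdef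
  have hmeT₂ : Measurable fun x => e (T₂ x) := e.measurable.comp hT₂_meas
  set lamK := Kernel.map κ (fun x => e (T₂ x)) with hlamK
  haveI : IsMarkovKernel lamK := Kernel.IsMarkovKernel.map κ hmeT₂
  set Pν : (Fin n → ℝ) → Measure ℝ := fun b => (ρ b).map e with hPν
  haveI hPprob : ∀ b, IsProbabilityMeasure (Pν b) := fun b =>
    Measure.isProbabilityMeasure_map e.measurable.aemeasurable
  have hPmeas : ∀ t : ℝ, Measurable fun b => Pν b (Iic t) := by
    intro t
    simp only [hPν, Measure.map_apply e.measurable measurableSet_Iic]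
    exact Kernel.measurable_coe ρ (e.measurable measurableSet_Iic)
  set PL : (Fin n → ℝ) → Measure ℝ := fun y => lamK y with hPL
  haveI hPLprob : ∀ y, IsProbabilityMeasure (PL y) := fun y => inferInstance
  have hPLmeas : ∀ t : ℝ, Measurable fun y => PL y (Iic t) := fun t =>
    Kernel.measurable_coe lamK measurableSet_Iic
  have hq_meas := measurable_quantile_uncurry Pν hPmeas
  have hc_meas := measurable_cdfR_uncurry PL hPLmeas
  set Tb : (Fin n → ℝ) × (Fin n → ℝ) → (Fin n → ℝ) :=
    fun p => e.symm (quantile (Pν (T₁ p.1)) (cdfR (PL p.1) (e p.2))) with hTb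
  have hTb_meas : Measurable Tb := by
    apply e.symm.measurable.comp
    exact hq_meas.comp ((hT₁_meas.comp measurable_fst).prodMk
      (hc_meas.comp (measurable_fst.prodMk (e.measurable.comp measurable_snd))))
  refine ⟨Tb, hTb_meas, ?_⟩
  -- `lamK y` is atomless for a.e. `y`
  have hκac : ∀ᵐ y ∂μ.fst, κ y ≪ (volume : Measure (Fin n → ℝ)) := condKernel_ac μ hμ_ac
  have hνsnd_atom : ∀ d : Fin n → ℝ, (ν.map Prod.snd) {d} = 0 := by
    intro d
    rw [Measure.map_apply measurable_snd (measurableSet_singleton d)]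
    refine hν_ac ?_
    have hset : Prod.snd ⁻¹' ({d} : Set (Fin n → ℝ)) = (univ : Set (Fin n → ℝ)) ×ˢ {d} := by
      ext p
      simp only [mem_preimage, mem_singleton_iff, mem_prod, mem_univ, true_and]
    rw [Measure.volume_eq_prod, hset, Measure.prod_prod, measure_singleton, mul_zero]
  have hκT₂ : ∀ d : Fin n → ℝ, ∀ᵐ y ∂μ.fst, κ y (T₂ ⁻¹' {d}) = 0 := by
    intro d
    have hms : MeasurableSet (T₂ ⁻¹' ({d} : Set (Fin n → ℝ))) :=
      hT₂_meas (measurableSet_singleton d)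
    have hμ0 : μ (Prod.snd ⁻¹' (T₂ ⁻¹' {d})) = 0 := by
      have h2 : (μ.map Prod.snd).map T₂ {d} = (ν.map Prod.snd) {d} := by rw [hT₂]
      rw [Measure.map_apply hT₂_meas (measurableSet_singleton d),
        Measure.map_apply measurable_snd hms] at h2
      rw [h2]
      exact hνsnd_atom d
    have h3 : ∫⁻ y, κ y (T₂ ⁻¹' {d}) ∂μ.fst = 0 := by
      have h4 := Measure.disintegrate μ κ
      have h5 : (μ.fst ⊗ₘ κ) (Prod.snd ⁻¹' (T₂ ⁻¹' {d})) = 0 := by rw [h4]; exact hμ0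
      rw [Measure.compProd_apply (measurable_snd hms)] at h5
      have h6 : ∀ y : Fin n → ℝ,
          Prod.mk y ⁻¹' (Prod.snd ⁻¹' (T₂ ⁻¹' ({d} : Set (Fin n → ℝ)))) = T₂ ⁻¹' {d} := by
        intro y; ext x; simp
      simpa only [h6] using h5
    have h7 := (lintegral_eq_zero_iff (Kernel.measurable_coe κ hms)).1 h3
    filter_upwards [h7] with y hy using hy
  set C : Set (Fin n → ℝ) := {d | 0 < volume (T₂ ⁻¹' {d})} with hC
  have hCc : C.Countable := by
    refine Measure.countable_meas_pos_of_disjoint_iUnion₀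
      (μ := (volume : Measure (Fin n → ℝ))) (As := fun d => T₂ ⁻¹' {d})
      (fun d => (hT₂_meas (measurableSet_singleton d)).nullMeasurableSet) ?_
    intro i j hij
    exact Disjoint.aedisjoint (Disjoint.preimage T₂ (disjoint_singleton.2 hij))
  have hae2 : ∀ᵐ y ∂μ.fst, ∀ d ∈ C, κ y (T₂ ⁻¹' {d}) = 0 :=
    (ae_ball_iff hCc).2 fun d _ => hκT₂ d
  have hatomless : ∀ᵐ y ∂μ.fst, ∀ c : ℝ, PL y {c} = 0 := by
    filter_upwards [hκac, hae2] with y hy1 hy2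
    intro c
    have hsing : ((fun x => e (T₂ x)) ⁻¹' ({c} : Set ℝ)) = T₂ ⁻¹' {e.symm c} := by
      ext x
      simp only [mem_preimage, mem_singleton_iff]
      constructor
      · intro h; rw [← h]; simp
      · intro h; rw [h]; simp
    have happ : PL y {c} = κ y ((fun x => e (T₂ x)) ⁻¹' {c}) := by
      simp only [hPL, hlamK]
      rw [Kernel.map_apply' κ hmeT₂ y (measurableSet_singleton c)]
    rw [happ, hsing]
    by_cases hd : e.symm c ∈ C
    · exact hy2 _ hd
    · refine hy1 ?_
      simp only [hC, mem_setOf_eq, not_lt, le_zero_iff] at hd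
      exact hd
  -- main computation
  refine Measure.ext fun s hs => ?_
  set T : (Fin n → ℝ) × (Fin n → ℝ) → (Fin n → ℝ) × (Fin n → ℝ) :=
    fun z => (T₁ z.1, Tb (z.1, T₂ z.2)) with hTdef
  have hT_meas : Measurable T := (hT₁_meas.comp measurable_fst).prodMk
    (hTb_meas.comp (measurable_fst.prodMk (hT₂_meas.comp measurable_snd)))
  show μ.map T s = ν s
  rw [Measure.map_apply hT_meas hs]
  conv_lhs => rw [← Measure.disintegrate μ κ]
  conv_rhs => rw [← Measure.disintegrate ν ρ]
  rw [Measure.compProd_apply (hT_meas hs), Measure.compProd_apply hs]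
  have hstep : ∀ᵐ y ∂μ.fst,
      κ y (Prod.mk y ⁻¹' (T ⁻¹' s)) = ρ (T₁ y) (Prod.mk (T₁ y) ⁻¹' s) := by
    filter_upwards [hatomless] with y hy
    have hqm : Measurable (quantile (Pν (T₁ y))) :=
      hq_meas.comp (measurable_const.prodMk measurable_id)
    have hg : Measurable fun r : ℝ => quantile (Pν (T₁ y)) (cdfR (PL y) r) :=
      hqm.comp cdfR_mono.measurable
    have hCset : MeasurableSet ((fun r' : ℝ => (T₁ y, e.symm r')) ⁻¹' s) :=
      (measurable_const.prodMk e.symm.measurable) hs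
    have hsec : Prod.mk y ⁻¹' (T ⁻¹' s)
        = (fun x => e (T₂ x)) ⁻¹'
          ((fun r => (T₁ y, e.symm (quantile (Pν (T₁ y)) (cdfR (PL y) r)))) ⁻¹' s) := by
      ext x
      simp only [hTdef, hTb, mem_preimage]
    have hBmeas : MeasurableSet
        ((fun r => (T₁ y, e.symm (quantile (Pν (T₁ y)) (cdfR (PL y) r)))) ⁻¹' s) :=
      (measurable_const.prodMk (e.symm.measurable.comp hg)) hs
    calc κ y (Prod.mk y ⁻¹' (T ⁻¹' s))
        = lamK y ((fun r => (T₁ y, e.symm (quantile (Pν (T₁ y)) (cdfR (PL y) r)))) ⁻¹' s) := by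
          rw [hsec, hlamK, Kernel.map_apply' κ hmeT₂ y hBmeas]
      _ = (PL y).map (fun r => quantile (Pν (T₁ y)) (cdfR (PL y) r))
            ((fun r' => (T₁ y, e.symm r')) ⁻¹' s) := by
          rw [Measure.map_apply hg hCset]
          rfl
      _ = Pν (T₁ y) ((fun r' => (T₁ y, e.symm r')) ⁻¹' s) := by
          rw [map_quantile_cdfR (PL y) (Pν (T₁ y)) hy hqm]
      _ = ρ (T₁ y) (Prod.mk (T₁ y) ⁻¹' s) := by
          rw [hPν, Measure.map_apply e.measurable hCset]
          congr 1
          ext v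
          simp
  rw [lintegral_congr_ae hstep]
  have hρmeas : Measurable fun b => ρ b (Prod.mk b ⁻¹' s) :=
    Kernel.measurable_kernel_prodMk_left hs
  rw [← lintegral_map hρmeas hT₁_meas]
  have hfstmap : μ.fst.map T₁ = ν.fst := hT₁
  rw [hfstmap]
end
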